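/- Let X and Y be complex square matrices of the same size n×n. Then exp(X + Y) = lim_{N→∞} (exp(X/N)·(I + Y/N))^N, where the limit is taken entrywise (equivalently, in the norm topology on n×n matrices). -/

import Mathlib

open Matrix NormedSpace Filter

section Aux

variable {𝔸 : Type*} [NormedRing 𝔸] [NormedAlgebra ℂ 𝔸] [CompleteSpace 𝔸] [NormOneClass 𝔸]

lemma aux_exp_eq_tsum (x : 𝔸) : exp x = ∑' n : ℕ, ((n.factorial : ℂ))⁻¹ • x ^ n := by
  rw [exp_eq_tsum ℂ]

lemma aux_two_pow_le_factorial (n : ℕ) : (2:ℝ)^(n+1) ≤ ((n+2).factorial : ℝ) := by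
  induction n with
  | zero => norm_num [Nat.factorial]
  | succ k ih =>
      have hfac : ((k+3).factorial : ℝ) = ((k:ℝ)+3) * (k+2).factorial := by
        rw [show k+3 = (k+2)+1 from rfl, Nat.factorial_succ]; push_cast; ring
      rw [show k+1+1 = k+2 from rfl, show k+1+2 = k+3 from rfl, hfac, pow_succ]
      have h2 : (2:ℝ) ≤ (k:ℝ)+3 := by
        have : (0:ℝ) ≤ (k:ℝ) := Nat.cast_nonneg k
        linarith
      calc (2:ℝ)^(k+1) * 2 ≤ ((k+2).factorial : ℝ) * ((k:ℝ)+3) := by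
            apply mul_le_mul ih h2 (by norm_num) (by positivity)
        _ = ((k:ℝ)+3) * (k+2).factorial := by ring

lemma aux_norm_exp_le (x : 𝔸) : ‖exp x‖ ≤ Real.exp ‖x‖ := by
  have hreal : Real.exp ‖x‖ = ∑' n : ℕ, ‖x‖ ^ n / (n.factorial : ℝ) := by
    rw [Real.exp_eq_exp_ℝ, exp_eq_tsum_div]
  rw [aux_exp_eq_tsum, hreal]
  refine (norm_tsum_le_tsum_norm (norm_expSeries_summable' (𝕂 := ℂ) x)).trans ?_
  refine Summable.tsum_le_tsum (fun n => ?_) (norm_expSeries_summable' (𝕂 := ℂ) x)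
    (Real.summable_pow_div_factorial ‖x‖)
  rw [norm_smul, norm_inv, Complex.norm_natCast, div_eq_inv_mul]
  exact mul_le_mul_of_nonneg_left (norm_pow_le x n) (by positivity)

lemma aux_norm_exp_sub_le (x : 𝔸) (hx : ‖x‖ ≤ 1) : ‖exp x - 1 - x‖ ≤ ‖x‖^2 := by
  have hs : Summable fun n : ℕ => ((n.factorial : ℂ))⁻¹ • x ^ n :=
    (norm_expSeries_summable' (𝕂 := ℂ) x).of_norm
  have h2 := Summable.sum_add_tsum_nat_add (f := fun n : ℕ => ((n.factorial : ℂ))⁻¹ • x ^ n) 2 hs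
  simp only [Finset.sum_range_succ, Finset.sum_range_zero, Nat.factorial_zero,
    Nat.factorial_one, Nat.cast_one, inv_one, one_smul, pow_zero, pow_one, zero_add] at h2
  have key : exp x - 1 - x = ∑' n : ℕ, ((((n+2).factorial : ℂ))⁻¹ • x ^ (n+2)) := by
    rw [aux_exp_eq_tsum, ← h2]
    abel
  rw [key]
  have hsn : Summable fun n : ℕ => ‖(((n+2).factorial : ℂ))⁻¹ • x ^ (n+2)‖ :=
    ((norm_expSeries_summable' (𝕂 := ℂ) x)).comp_injective (add_left_injective 2)
  refine (norm_tsum_le_tsum_norm hsn).trans ?_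
  have hgeomsum : Summable fun n : ℕ => (1/2:ℝ)^n :=
    summable_geometric_of_lt_one (by norm_num) (by norm_num)
  have hgeom : Summable fun n : ℕ => ‖x‖^2 * (1/2:ℝ)^(n+1) := by
    apply Summable.mul_left
    exact hgeomsum.comp_injective (add_left_injective 1)
  refine (Summable.tsum_le_tsum (fun n => ?_) hsn hgeom).trans ?_
  · rw [norm_smul, norm_inv, Complex.norm_natCast]
    have h1 : ‖x ^ (n+2)‖ ≤ ‖x‖^2 := by
      calc ‖x ^ (n+2)‖ ≤ ‖x‖^(n+2) := norm_pow_le x (n+2)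
        _ = ‖x‖^2 * ‖x‖^n := by ring
        _ ≤ ‖x‖^2 * 1 :=
            mul_le_mul_of_nonneg_left (pow_le_one₀ (norm_nonneg x) hx) (by positivity)
        _ = ‖x‖^2 := mul_one _
    have h2' : ((((n+2).factorial : ℝ)))⁻¹ ≤ (1/2:ℝ)^(n+1) := by
      rw [one_div, inv_pow]
      exact inv_anti₀ (by positivity) (aux_two_pow_le_factorial n)
    calc (((n+2).factorial : ℝ))⁻¹ * ‖x ^ (n+2)‖
        ≤ (1/2:ℝ)^(n+1) * ‖x‖^2 :=
          mul_le_mul h2' h1 (norm_nonneg _) (by positivity)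
      _ = ‖x‖^2 * (1/2:ℝ)^(n+1) := by ring
  · rw [tsum_mul_left]
    have hgeo1 : ∑' n : ℕ, (1/2:ℝ)^(n+1) = 1 := by
      have h := Summable.sum_add_tsum_nat_add (f := fun n : ℕ => (1/2:ℝ)^n) 1 hgeomsum
      rw [tsum_geometric_of_lt_one (by norm_num) (by norm_num)] at h
      simp only [Finset.sum_range_one, pow_zero] at h
      norm_num at h
      linarith
    rw [hgeo1, mul_one]

lemma aux_pow_sub_pow (a b : 𝔸) (M : ℝ) (hM : 1 ≤ M) (ha : ‖a‖ ≤ M) (hb : ‖b‖ ≤ M) :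
    ∀ k : ℕ, ‖a^k - b^k‖ ≤ k * M^k * ‖a - b‖ := by
  intro k
  induction k with
  | zero => simp
  | succ k ih =>
      have hM0 : (0:ℝ) ≤ M := le_trans zero_le_one hM
      have h1 : a^(k+1) - b^(k+1) = a^k * (a - b) + (a^k - b^k) * b := by
        rw [pow_succ, pow_succ]; noncomm_ring
      rw [h1]
      have hak : ‖a^k‖ ≤ M^k := (norm_pow_le a k).trans (pow_le_pow_left₀ (norm_nonneg a) ha k)
      have hMk0 : (0:ℝ) ≤ M^k := pow_nonneg hM0 k
      have hab0 : (0:ℝ) ≤ ‖a - b‖ := norm_nonneg _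
      calc ‖a^k * (a - b) + (a^k - b^k) * b‖
          ≤ ‖a^k * (a-b)‖ + ‖(a^k - b^k) * b‖ := norm_add_le _ _
        _ ≤ ‖a^k‖ * ‖a-b‖ + ‖a^k - b^k‖ * ‖b‖ :=
            add_le_add (norm_mul_le _ _) (norm_mul_le _ _)
        _ ≤ M^k * ‖a-b‖ + (k * M^k * ‖a-b‖) * M := by
            apply add_le_add
            · exact mul_le_mul_of_nonneg_right hak (norm_nonneg _)
            · exact mul_le_mul ih hb (norm_nonneg _) (by positivity)
        _ ≤ (↑(k+1)) * M^(k+1) * ‖a - b‖ := by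
            rw [pow_succ]
            push_cast
            nlinarith [mul_nonneg (mul_nonneg hMk0 hab0) (sub_nonneg.2 hM),
              Nat.cast_nonneg (α := ℝ) k]

lemma trotter (X Y : 𝔸) :
    Tendsto
      (fun N : ℕ => (exp (((N : ℂ))⁻¹ • X) * (1 + ((N : ℂ))⁻¹ • Y)) ^ N)
      atTop (nhds (exp (X + Y))) := by
  set c : ℝ := ‖X‖ + ‖Y‖ + 1 with hc
  have hc1 : 1 ≤ c := by rw [hc]; linarith [norm_nonneg X, norm_nonneg Y]
  have hc0 : 0 < c := lt_of_lt_of_le one_pos hc1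
  rw [tendsto_iff_norm_sub_tendsto_zero]
  have hK : Tendsto (fun N : ℕ => (7 * c^2 * Real.exp (2*c)) / N) atTop (nhds 0) :=
    tendsto_const_div_atTop_nhds_zero_nat _
  apply squeeze_zero' (Eventually.of_forall fun N => norm_nonneg _) _ hK
  -- eventual bound
  obtain ⟨N₀, hN₀⟩ := exists_nat_gt (2*c)
  filter_upwards [eventually_ge_atTop (N₀ + 1)] with N hN
  have hN1 : 1 ≤ N := le_trans (Nat.le_add_left 1 N₀) hN
  have hNpos : (0:ℝ) < N := by exact_mod_cast hN1
  have hcN : 2 * c ≤ N := by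
    have : (N₀:ℝ) ≤ N := by exact_mod_cast le_trans (Nat.le_succ N₀) hN
    linarith
  have htle : c / N ≤ 1/2 := by
    rw [div_le_div_iff₀ hNpos (by norm_num)]
    linarith
  set x := ((N:ℂ))⁻¹ • X with hxdef
  set y := ((N:ℂ))⁻¹ • Y with hydef
  have hnormcast : ‖((N:ℂ))⁻¹‖ = ((N:ℝ))⁻¹ := by
    rw [norm_inv, Complex.norm_natCast]
  have hxn : ‖x‖ ≤ c / N := by
    rw [hxdef, norm_smul, hnormcast, inv_mul_eq_div, div_le_div_iff₀ hNpos hNpos]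
    have : ‖X‖ ≤ c := by rw [hc]; linarith [norm_nonneg Y]
    nlinarith
  have hyn : ‖y‖ ≤ c / N := by
    rw [hydef, norm_smul, hnormcast, inv_mul_eq_div, div_le_div_iff₀ hNpos hNpos]
    have : ‖Y‖ ≤ c := by rw [hc]; linarith [norm_nonneg X]
    nlinarith
  have htpos : 0 ≤ c / N := by positivity
  have hx1 : ‖x‖ ≤ 1 := hxn.trans (htle.trans (by norm_num))
  have hy1 : ‖y‖ ≤ 1 := hyn.trans (htle.trans (by norm_num))
  have hxy1 : ‖x + y‖ ≤ 1 := by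
    calc ‖x + y‖ ≤ ‖x‖ + ‖y‖ := norm_add_le _ _
      _ ≤ 1/2 + 1/2 := add_le_add (hxn.trans htle) (hyn.trans htle)
      _ = 1 := by norm_num
  set a := exp x * (1 + y) with hadef
  set b := exp (x + y) with hbdef
  -- b ^ N = exp (X + Y)
  have hbN : b ^ N = exp (X + Y) := by
    letI : NormedAlgebra ℚ 𝔸 := NormedAlgebra.restrictScalars ℚ ℂ 𝔸
    rw [hbdef, ← NormedSpace.exp_nsmul]
    congr 1
    rw [hxdef, hydef, ← smul_add, ← Nat.cast_smul_eq_nsmul ℂ, smul_smul]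
    rw [mul_inv_cancel₀ (by exact_mod_cast hNpos.ne'), one_smul]
  -- bound on ‖a - b‖
  have hab : ‖a - b‖ ≤ 7 * (c/N)^2 := by
    have hrx := aux_norm_exp_sub_le x hx1
    have hrxy := aux_norm_exp_sub_le (x + y) hxy1
    have hsplit : a - b = (exp x - 1 - x) * (1 + y) + x * y
        - (exp (x+y) - 1 - (x+y)) := by
      rw [hadef, hbdef]; noncomm_ring
    rw [hsplit]
    have h1y : ‖(1:𝔸) + y‖ ≤ 2 := by
      calc ‖(1:𝔸) + y‖ ≤ ‖(1:𝔸)‖ + ‖y‖ := norm_add_le _ _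
        _ ≤ 1 + 1 := by rw [norm_one]; exact add_le_add_right hy1 1
        _ = 2 := by norm_num
    have t2 : ‖x‖^2 ≤ (c/N)^2 := pow_le_pow_left₀ (norm_nonneg _) hxn 2
    have t3 : ‖x + y‖^2 ≤ (2*(c/N))^2 := by
      apply pow_le_pow_left₀ (norm_nonneg _)
      calc ‖x + y‖ ≤ ‖x‖ + ‖y‖ := norm_add_le _ _
        _ ≤ c/N + c/N := add_le_add hxn hyn
        _ = 2*(c/N) := by ring
    calc ‖(exp x - 1 - x) * (1 + y) + x * y - (exp (x+y) - 1 - (x+y))‖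
        ≤ ‖(exp x - 1 - x) * (1 + y) + x * y‖ + ‖exp (x+y) - 1 - (x+y)‖ :=
          norm_sub_le _ _
      _ ≤ (‖(exp x - 1 - x) * (1 + y)‖ + ‖x * y‖) + ‖exp (x+y) - 1 - (x+y)‖ :=
          add_le_add_left (norm_add_le _ _) _
      _ ≤ (‖exp x - 1 - x‖ * ‖1 + y‖ + ‖x‖ * ‖y‖) + ‖x+y‖^2 :=
          add_le_add (add_le_add (norm_mul_le _ _) (norm_mul_le _ _)) hrxy
      _ ≤ (‖x‖^2 * 2 + (c/N) * (c/N)) + (2*(c/N))^2 := by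
          apply add_le_add
          · apply add_le_add
            · exact mul_le_mul hrx h1y (norm_nonneg _) (by positivity)
            · exact mul_le_mul hxn hyn (norm_nonneg _) htpos
          · exact t3
      _ ≤ ((c/N)^2 * 2 + (c/N) * (c/N)) + (2*(c/N))^2 := by nlinarith
      _ = 7 * (c/N)^2 := by ring
  -- bound on norms of a, b
  set M : ℝ := Real.exp (2 * (c/N)) with hMdef
  have hM1 : 1 ≤ M := Real.one_le_exp (by positivity)
  have haM : ‖a‖ ≤ M := by
    calc ‖a‖ ≤ ‖exp x‖ * ‖1 + y‖ := norm_mul_le _ _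
      _ ≤ Real.exp ‖x‖ * Real.exp ‖y‖ := by
          apply mul_le_mul (aux_norm_exp_le x) _ (norm_nonneg _) (Real.exp_pos _).le
          calc ‖(1:𝔸) + y‖ ≤ ‖(1:𝔸)‖ + ‖y‖ := norm_add_le _ _
            _ = 1 + ‖y‖ := by rw [norm_one]
            _ = ‖y‖ + 1 := by ring
            _ ≤ Real.exp ‖y‖ := Real.add_one_le_exp ‖y‖
      _ = Real.exp (‖x‖ + ‖y‖) := (Real.exp_add _ _).symm
      _ ≤ M := by
          rw [hMdef]; apply Real.exp_le_exp.mpr; have := add_le_add hxn hyn; linarith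
  have hbM : ‖b‖ ≤ M := by
    calc ‖b‖ ≤ Real.exp ‖x + y‖ := aux_norm_exp_le _
      _ ≤ M := by
          rw [hMdef]; apply Real.exp_le_exp.mpr
          calc ‖x + y‖ ≤ ‖x‖ + ‖y‖ := norm_add_le _ _
            _ ≤ 2 * (c/N) := by linarith [add_le_add hxn hyn]
  have hMN : M ^ N ≤ Real.exp (2*c) := by
    rw [hMdef, ← Real.exp_nat_mul]
    apply Real.exp_le_exp.mpr
    have heq : (N:ℝ) * (2 * (c/N)) = 2 * c := by field_simp
    rw [heq]
  -- final estimate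
  have hfinal := aux_pow_sub_pow a b M hM1 haM hbM N
  rw [← hbN]
  calc ‖a ^ N - b ^ N‖ ≤ N * M^N * ‖a - b‖ := hfinal
    _ ≤ N * Real.exp (2*c) * (7 * (c/N)^2) := by
        apply mul_le_mul _ hab (norm_nonneg _) (by positivity)
        exact mul_le_mul_of_nonneg_left hMN (by positivity)
    _ = 7 * c^2 * Real.exp (2*c) / N := by
        field_simp

end Aux

theorem stmt7 (n : ℕ) (X Y : Matrix (Fin n) (Fin n) ℂ) :
    Tendsto
      (fun N : ℕ => (exp (((N : ℂ))⁻¹ • X) * (1 + ((N : ℂ))⁻¹ • Y)) ^ N)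
      atTop (nhds (exp (X + Y))) := by
  rcases Nat.eq_zero_or_pos n with rfl | hn
  · have : Subsingleton (Matrix (Fin 0) (Fin 0) ℂ) := by
      constructor; intro a b; ext i j; exact absurd i.2 (by omega)
    have h : (fun N : ℕ => (exp (((N : ℂ))⁻¹ • X) * (1 + ((N : ℂ))⁻¹ • Y)) ^ N)
        = fun _ => exp (X + Y) := by
      funext N; exact Subsingleton.elim _ _
    rw [h]; exact tendsto_const_nhds
  · haveI : Nonempty (Fin n) := ⟨⟨0, hn⟩⟩
    letI : SeminormedRing (Matrix (Fin n) (Fin n) ℂ) := Matrix.linftyOpSemiNormedRing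
    letI : NormedRing (Matrix (Fin n) (Fin n) ℂ) := Matrix.linftyOpNormedRing
    letI : NormedAlgebra ℂ (Matrix (Fin n) (Fin n) ℂ) := Matrix.linftyOpNormedAlgebra
    exact trotter X Y
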